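/- GNC truncated-least-squares weight update, outlier case: let μ > 0, c > 0 and r ≥ ((μ+1)/μ)·c². Then the function f(w) = w·r + μ(1−w)c²/(μ+w) on the interval [0,1] attains its minimum at w = 0; that is, f(0) ≤ f(w) for all w ∈ [0,1]. -/

import Mathlib

/-- GNC truncated-least-squares weight update, outlier case: if
`r ≥ ((μ+1)/μ)·c²`, then `f(w) = w·r + μ(1−w)c²/(μ+w)` attains its minimum
on `[0,1]` at `w = 0`. -/
theorem gnc_tls_outlier_case (μ c r : ℝ) (hμ : 0 < μ) (hc : 0 < c)
    (hr : ((μ + 1) / μ) * c ^ 2 ≤ r) :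
    ∀ w ∈ Set.Icc (0 : ℝ) 1,
      (0 : ℝ) * r + μ * (1 - 0) * c ^ 2 / (μ + 0) ≤
        w * r + μ * (1 - w) * c ^ 2 / (μ + w) := by
  intro w hw
  obtain ⟨h0, h1⟩ := hw
  have hμw : 0 < μ + w := by linarith
  have hr' : (μ + 1) * c ^ 2 ≤ μ * r := by
    rw [div_mul_eq_mul_div, div_le_iff₀ hμ] at hr
    linarith
  have hne : μ + w ≠ 0 := ne_of_gt hμw
  have hL : (0 : ℝ) * r + μ * (1 - 0) * c ^ 2 / (μ + 0) = c ^ 2 := by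
    field_simp
    ring
  rw [hL, show w * r + μ * (1 - w) * c ^ 2 / (μ + w)
      = (w * r * (μ + w) + μ * (1 - w) * c ^ 2) / (μ + w) by field_simp,
    le_div_iff₀ hμw]
  nlinarith [mul_nonneg (mul_nonneg h0 hμw.le) (sub_nonneg.mpr hr'),
    mul_nonneg (mul_nonneg (mul_nonneg h0 h0) hμ.le) (sq_nonneg c),
    mul_nonneg (mul_nonneg h0 h0) (sq_nonneg c)]
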